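/- For every spil B, the space spec(B) of prime ≺-filters with the topology generated by the sets O_x = {F : x ∈ F} is compact. -/

import Mathlib

/-- A strong proximity involution lattice (spil), stated unbundled:
`sup`, `inf` a bounded distributive lattice structure, `inv` an involution,
`prec` the proximity relation. Finite joins/meets are via list folds
(empty join is `bot`, empty meet is `top`). -/
structure IsSpil {B : Type*} (sup inf : B → B → B) (inv : B → B) (bot top : B)
    (prec : B → B → Prop) : Prop where
  sup_comm : ∀ a b, sup a b = sup b a
  sup_assoc : ∀ a b c, sup (sup a b) c = sup a (sup b c)
  inf_comm : ∀ a b, inf a b = inf b a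
  inf_assoc : ∀ a b c, inf (inf a b) c = inf a (inf b c)
  sup_inf_absorb : ∀ a b, sup a (inf a b) = a
  inf_sup_absorb : ∀ a b, inf a (sup a b) = a
  inf_sup_distrib : ∀ a b c, inf a (sup b c) = sup (inf a b) (inf a c)
  bot_sup : ∀ a, sup bot a = a
  top_inf : ∀ a, inf top a = a
  prec_trans : ∀ a b c, prec a b → prec b c → prec a c
  prec_interpolate : ∀ a c, prec a c → ∃ b, prec a b ∧ prec b c
  join_prec : ∀ (M : List B) (a : B), (∀ m ∈ M, prec m a) ↔ prec (M.foldr sup bot) a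
  prec_meet : ∀ (M : List B) (a : B), (∀ m ∈ M, prec a m) ↔ prec a (M.foldr inf top)
  inv_inv : ∀ x, inv (inv x) = x
  exchange : ∀ x y z, prec (inf x y) z ↔ prec x (sup z (inv y))
  inv_sup : ∀ x y, inv (sup x y) = inf (inv x) (inv y)
  inv_inf : ∀ x y, inv (inf x y) = sup (inv x) (inv y)
  prec_bot : ∀ x y, prec x (inf y (inv y)) → prec x bot

/-- `↑A = {x : ∃ a ∈ A, a ≺ x}`. -/
def upSet {B : Type*} (prec : B → B → Prop) (A : Set B) : Set B :=
  {x | ∃ a ∈ A, prec a x}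

/-- A `≺`-filter: nonempty, closed under binary meets, and `F = ↑F`. -/
def IsPrecFilter {B : Type*} (inf : B → B → B) (prec : B → B → Prop) (F : Set B) : Prop :=
  F.Nonempty ∧ (∀ a ∈ F, ∀ b ∈ F, inf a b ∈ F) ∧ F = upSet prec F

/-- A prime `≺`-filter: every finite join in `F` has a joinand in `F`. -/
def IsPrimePrecFilter {B : Type*} (sup inf : B → B → B) (bot : B)
    (prec : B → B → Prop) (F : Set B) : Prop :=
  IsPrecFilter inf prec F ∧ ∀ M : List B, M.foldr sup bot ∈ F → ∃ a ∈ M, a ∈ F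
variable {B : Type*} {sup inf : B → B → B} {inv : B → B} {bot top : B}
  {prec : B → B → Prop}

namespace IsSpil

variable (h : IsSpil sup inf inv bot top prec)
include h

/-- A distributive lattice structure derived from the spil axioms, with `a ≤ b ↔ sup a b = b`. -/
def distribLattice : DistribLattice B :=
  letI : Max B := ⟨sup⟩
  letI : Min B := ⟨inf⟩
  letI : Lattice B := Lattice.mk' h.sup_comm h.sup_assoc h.inf_comm h.inf_assoc
    h.sup_inf_absorb h.inf_sup_absorb
  DistribLattice.ofInfSupLe fun a b c => le_of_eq (h.inf_sup_distrib a b c)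

theorem prec_top (a : B) : prec a top :=
  (h.prec_meet [] a).1 (by simp)

theorem bot_prec (a : B) : prec bot a :=
  (h.join_prec [] a).1 (by simp)

theorem sup_bot (a : B) : sup a bot = a := (h.sup_comm a bot).trans (h.bot_sup a)

theorem inf_top (a : B) : inf a top = a := (h.inf_comm a top).trans (h.top_inf a)

theorem inf_bot (a : B) : inf a bot = bot := by
  rw [h.inf_comm]
  calc inf bot a = inf bot (sup bot a) := by rw [h.bot_sup]
    _ = bot := h.inf_sup_absorb bot a

theorem le_to_supeq {a b : B} :
    letI := h.distribLattice
    a ≤ b → sup a b = b := by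
  intro hle
  letI := h.distribLattice
  exact sup_eq_right.mpr hle

theorem le_to_infeq {a b : B} :
    letI := h.distribLattice
    a ≤ b → inf b a = a := by
  intro hle
  letI := h.distribLattice
  exact inf_eq_right.mpr hle

theorem mono_left {u v z : B} (huv : sup u v = v) (hp : prec v z) : prec u z := by
  have e : List.foldr sup bot [u, v] = v := by
    simp only [List.foldr_cons, List.foldr_nil]
    rw [h.sup_bot, huv]
  exact (h.join_prec [u, v] z).2 (by rw [e]; exact hp) u (by simp)

theorem mono_right {x z w : B} (hzw : inf w z = z) (hp : prec x z) : prec x w := by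
  have e : List.foldr inf top [w, z] = z := by
    simp only [List.foldr_cons, List.foldr_nil]
    rw [h.inf_top, hzw]
  exact (h.prec_meet [w, z] x).2 (by rw [e]; exact hp) w (by simp)

theorem join2 {a b z : B} (ha : prec a z) (hb : prec b z) : prec (sup a b) z := by
  have e : List.foldr sup bot [a, b] = sup a b := by
    simp only [List.foldr_cons, List.foldr_nil]; rw [h.sup_bot]
  have := (h.join_prec [a, b] z).1 (by
    intro m hm
    simp only [List.mem_cons, List.not_mem_nil, or_false] at hm
    rcases hm with rfl | rfl
    · exact ha
    · exact hb)
  rwa [e] at this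

theorem meet2 {x a b : B} (ha : prec x a) (hb : prec x b) : prec x (inf a b) := by
  have e : List.foldr inf top [a, b] = inf a b := by
    simp only [List.foldr_cons, List.foldr_nil]; rw [h.inf_top]
  have := (h.prec_meet [a, b] x).1 (by
    intro m hm
    simp only [List.mem_cons, List.not_mem_nil, or_false] at hm
    rcases hm with rfl | rfl
    · exact ha
    · exact hb)
  rwa [e] at this

theorem prec_antitone {x y : B} (hp : prec x y) : prec (inv y) (inv x) := by
  have h1 : prec x (sup bot (inv (inv y))) := by rwa [h.inv_inv, h.bot_sup]
  have h2 : prec (inf x (inv y)) bot := (h.exchange x (inv y) bot).2 h1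
  rw [h.inf_comm] at h2
  have h4 := (h.exchange (inv y) x bot).1 h2
  rwa [h.bot_sup] at h4

theorem splitLeft {a b c : B} (hp : prec a (sup b c)) :
    ∃ b₀, prec b₀ b ∧ prec a (sup b₀ c) := by
  have h1 : prec (inv (sup b c)) (inv a) := h.prec_antitone hp
  rw [h.inv_sup] at h1
  have h2 := (h.exchange (inv b) (inv c) (inv a)).1 h1
  rw [h.inv_inv] at h2
  obtain ⟨v, hv1, hv2⟩ := h.prec_interpolate _ _ h2
  refine ⟨inv v, ?_, ?_⟩
  · have := h.prec_antitone hv1; rwa [h.inv_inv] at this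
  · have h3 : prec (inf v (inv c)) (inv a) := by
      rw [h.exchange, h.inv_inv]; exact hv2
    have h4 := h.prec_antitone h3
    rwa [h.inv_inv, h.inv_inf, h.inv_inv] at h4

theorem splitRight {a b c : B} (hp : prec a (sup b c)) :
    ∃ c₀, prec c₀ c ∧ prec a (sup b c₀) := by
  rw [h.sup_comm] at hp
  obtain ⟨c₀, h1, h2⟩ := h.splitLeft hp
  rw [h.sup_comm] at h2
  exact ⟨c₀, h1, h2⟩

theorem cut {f s y : B} (hp : prec f (sup s (inf y (inv y)))) : prec f s := by
  obtain ⟨d₀, hd1, hd2⟩ := h.splitRight hp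
  have hdbot : prec d₀ bot := h.prec_bot d₀ y hd1
  have hds : prec d₀ s := h.mono_right (h.inf_bot s) hdbot
  obtain ⟨s₀, hs1, hs2⟩ := h.splitLeft hd2
  exact h.prec_trans _ _ _ hs2 (h.join2 hs1 hds)

theorem foldr_sup_append (M N : List B) :
    (M ++ N).foldr sup bot = sup (M.foldr sup bot) (N.foldr sup bot) := by
  induction M with
  | nil => simp [h.bot_sup]
  | cons m M ih => simp only [List.cons_append, List.foldr_cons, ih, h.sup_assoc]

theorem exists_prime_avoiding (X : Set B)
    (hX : ¬ ∃ M : List B, (∀ m ∈ M, m ∈ X) ∧ prec top (M.foldr sup bot)) :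
    ∃ F, IsPrimePrecFilter sup inf bot prec F ∧ ∀ x ∈ X, x ∉ F := by
  classical
  letI := h.distribLattice
  set I : Set B := {y | ∃ M : List B, (∀ m ∈ M, m ∈ X) ∧ prec y (M.foldr sup bot)} with hIdef
  set S : Set (Set B) := {F | IsPrecFilter inf prec F ∧ ∀ y ∈ F, y ∉ I} with hSdef
  have hF0 : {y | prec top y} ∈ S := by
    constructor
    · refine ⟨⟨top, h.prec_top top⟩, ?_, ?_⟩
      · intro a ha b hb; exact h.meet2 ha hb
      · ext y
        constructor
        · intro hy
          obtain ⟨w, hw1, hw2⟩ := h.prec_interpolate _ _ hy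
          exact ⟨w, hw1, hw2⟩
        · rintro ⟨a, ha, hay⟩
          exact h.prec_trans _ _ _ ha hay
    · rintro y hy ⟨M, hM1, hM2⟩
      exact hX ⟨M, hM1, h.prec_trans _ _ _ hy hM2⟩
  have hub : ∀ c ⊆ S, IsChain (· ⊆ ·) c → c.Nonempty → ∃ ub ∈ S, ∀ s ∈ c, s ⊆ ub := by
    intro c hcS hchain hcne
    refine ⟨⋃₀ c, ⟨⟨?_, ?_, ?_⟩, ?_⟩, fun s hs => Set.subset_sUnion_of_mem hs⟩
    · obtain ⟨F0, hF0c⟩ := hcne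
      obtain ⟨a, ha⟩ := (hcS hF0c).1.1
      exact ⟨a, F0, hF0c, ha⟩
    · rintro a ⟨Fa, hFa, haFa⟩ b ⟨Fb, hFb, hbFb⟩
      rcases hchain.total hFa hFb with hsub | hsub
      · exact ⟨Fb, hFb, (hcS hFb).1.2.1 a (hsub haFa) b hbFb⟩
      · exact ⟨Fa, hFa, (hcS hFa).1.2.1 a haFa b (hsub hbFb)⟩
    · ext y
      constructor
      · rintro ⟨Fy, hFy, hyFy⟩
        have hrw := (hcS hFy).1.2.2
        rw [hrw] at hyFy
        obtain ⟨a, ha, hay⟩ := hyFy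
        exact ⟨a, ⟨Fy, hFy, ha⟩, hay⟩
      · rintro ⟨a, ⟨Fa, hFa, haFa⟩, hay⟩
        refine ⟨Fa, hFa, ?_⟩
        rw [(hcS hFa).1.2.2]
        exact ⟨a, haFa, hay⟩
    · rintro y ⟨Fy, hFy, hyFy⟩
      exact (hcS hFy).2 y hyFy
  obtain ⟨F, -, hFmax⟩ := zorn_subset_nonempty S hub _ hF0
  have hFS : F ∈ S := hFmax.1
  have hFfil : IsPrecFilter inf prec F := hFS.1
  have hFdisj : ∀ y ∈ F, y ∉ I := hFS.2
  have hFup : ∀ {a y : B}, a ∈ F → prec a y → y ∈ F := by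
    intro a y ha hay
    rw [hFfil.2.2]; exact ⟨a, ha, hay⟩
  have hFwit : ∀ {y : B}, y ∈ F → ∃ a ∈ F, prec a y := by
    intro y hy
    rw [hFfil.2.2] at hy; exact hy
  have hGen : ∀ y : B, IsPrecFilter inf prec {z | ∃ f ∈ F, prec (inf f y) z} ∧
      F ⊆ {z | ∃ f ∈ F, prec (inf f y) z} := by
    intro y
    obtain ⟨f₀, hf₀⟩ := hFfil.1
    constructor
    · refine ⟨⟨top, f₀, hf₀, h.prec_top _⟩, ?_, ?_⟩
      · rintro a ⟨f₁, hf₁, hp₁⟩ b ⟨f₂, hf₂, hp₂⟩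
        refine ⟨inf f₁ f₂, hFfil.2.1 f₁ hf₁ f₂ hf₂, h.meet2 ?_ ?_⟩
        · exact h.mono_left (h.le_to_supeq (inf_le_inf_right y inf_le_left)) hp₁
        · exact h.mono_left (h.le_to_supeq (inf_le_inf_right y inf_le_right)) hp₂
      · ext z
        constructor
        · rintro ⟨f, hf, hp⟩
          obtain ⟨w, hw1, hw2⟩ := h.prec_interpolate _ _ hp
          exact ⟨w, ⟨f, hf, hw1⟩, hw2⟩
        · rintro ⟨w, ⟨f, hf, hp⟩, hwz⟩
          exact ⟨f, hf, h.prec_trans _ _ _ hp hwz⟩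
    · intro f hf
      obtain ⟨f₂, hf₂, hp⟩ := hFwit hf
      exact ⟨f₂, hf₂, h.mono_left (h.le_to_supeq inf_le_left) hp⟩
  have hPush : ∀ y₀ w : B, prec y₀ w → w ∉ F →
      ∃ f ∈ F, ∃ M : List B, (∀ m ∈ M, m ∈ X) ∧ prec (inf f y₀) (M.foldr sup bot) := by
    intro y₀ w hyw hwF
    by_contra hcon
    push_neg at hcon
    have hGS : {z | ∃ f ∈ F, prec (inf f y₀) z} ∈ S := by
      refine ⟨(hGen y₀).1, ?_⟩
      rintro z ⟨f, hf, hp⟩ ⟨M, hM1, hM2⟩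
      exact hcon f hf M hM1 (h.prec_trans _ _ _ hp hM2)
    have hGeq : {z | ∃ f ∈ F, prec (inf f y₀) z} ⊆ F := hFmax.2 hGS (hGen y₀).2
    obtain ⟨f₀, hf₀⟩ := hFfil.1
    exact hwF (hGeq ⟨f₀, hf₀, h.mono_left (h.le_to_supeq inf_le_right) hyw⟩)
  have prime2 : ∀ a b : B, sup a b ∈ F → a ∈ F ∨ b ∈ F := by
    intro a b hab
    by_contra hcon
    push_neg at hcon
    obtain ⟨haF, hbF⟩ := hcon
    obtain ⟨g, hgF, hg⟩ := hFwit hab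
    obtain ⟨a₀, ha₀, hg1⟩ := h.splitLeft hg
    obtain ⟨b₀, hb₀, hg2⟩ := h.splitRight hg1
    obtain ⟨f₁, hf₁F, M₁, hM₁X, hp₁⟩ := hPush a₀ a ha₀ haF
    obtain ⟨f₂, hf₂F, M₂, hM₂X, hp₂⟩ := hPush b₀ b hb₀ hbF
    have hfF : f₁ ∈ F → f₂ ∈ F → g ∈ F → inf (inf f₁ f₂) g ∈ F := fun u v w =>
      hFfil.2.1 _ (hFfil.2.1 _ u _ v) _ w
    have hq₁ : prec (inf (inf (inf f₁ f₂) g) a₀) (sup (M₁.foldr sup bot) (M₂.foldr sup bot)) := by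
      refine h.mono_right (h.le_to_infeq le_sup_left) ?_
      exact h.mono_left
        (h.le_to_supeq (inf_le_inf_right a₀ (le_trans inf_le_left inf_le_left))) hp₁
    have hq₂ : prec (inf (inf (inf f₁ f₂) g) b₀) (sup (M₁.foldr sup bot) (M₂.foldr sup bot)) := by
      refine h.mono_right (h.le_to_infeq le_sup_right) ?_
      exact h.mono_left
        (h.le_to_supeq (inf_le_inf_right b₀ (le_trans inf_le_left inf_le_right))) hp₂
    set f := inf (inf f₁ f₂) g with hfdef
    set s := sup (M₁.foldr sup bot) (M₂.foldr sup bot) with hsdef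
    set t := sup a₀ b₀ with htdef
    have hq : prec (inf f t) s := by
      rw [htdef, h.inf_sup_distrib]
      exact h.join2 hq₁ hq₂
    have hft : prec f t := h.mono_left (h.le_to_supeq inf_le_right) hg2
    have e1 : prec f (sup s (inv t)) := (h.exchange f t s).1 hq
    have e2 : prec f (inf (sup s (inv t)) t) := h.meet2 e1 hft
    have e3 : inf (sup s (inv t)) t = sup (inf t s) (inf t (inv t)) := by
      rw [h.inf_comm]; exact h.inf_sup_distrib t s (inv t)
    rw [e3] at e2
    have e4 : inf (sup s (inf t (inv t))) (sup (inf t s) (inf t (inv t)))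
        = sup (inf t s) (inf t (inv t)) :=
      h.le_to_infeq (sup_le (le_sup_of_le_left inf_le_right) le_sup_right)
    have e6 : prec f s := h.cut (h.mono_right e4 e2)
    have hfI : f ∈ I := by
      refine ⟨M₁ ++ M₂, ?_, ?_⟩
      · intro m hm
        rcases List.mem_append.1 hm with hm | hm
        · exact hM₁X m hm
        · exact hM₂X m hm
      · rw [h.foldr_sup_append]; exact e6
    exact hFdisj f (hfF hf₁F hf₂F hgF) hfI
  have primeL : ∀ M : List B, M.foldr sup bot ∈ F → ∃ m ∈ M, m ∈ F := by
    intro M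
    induction M with
    | nil =>
      intro hb
      exfalso
      obtain ⟨u, huF, hub⟩ := hFwit hb
      exact hFdisj u huF ⟨[], by simp, hub⟩
    | cons m M ih =>
      intro hmem
      simp only [List.foldr_cons] at hmem
      rcases prime2 m _ hmem with h1 | h2
      · exact ⟨m, List.mem_cons_self, h1⟩
      · obtain ⟨x, hx1, hx2⟩ := ih h2
        exact ⟨x, List.mem_cons_of_mem m hx1, hx2⟩
  refine ⟨F, ⟨hFfil, primeL⟩, ?_⟩
  intro x hxX hxF
  obtain ⟨a, haF, hax⟩ := hFwit hxF
  refine hFdisj a haF ⟨[x], by simpa using hxX, ?_⟩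
  show prec a (List.foldr sup bot [x])
  simp only [List.foldr_cons, List.foldr_nil]
  rw [h.sup_bot]
  exact hax

end IsSpil

theorem stmt15 (h : IsSpil sup inf inv bot top prec) :
    @CompactSpace {F : Set B // IsPrimePrecFilter sup inf bot prec F}
      (TopologicalSpace.generateFrom
        {S | ∃ x : B, S = {F : {F : Set B // IsPrimePrecFilter sup inf bot prec F} | x ∈ F.1}}) := by
  classical
  letI tS : TopologicalSpace {F : Set B // IsPrimePrecFilter sup inf bot prec F} :=
    TopologicalSpace.generateFrom
      {S | ∃ x : B, S = {F : {F : Set B // IsPrimePrecFilter sup inf bot prec F} | x ∈ F.1}}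
  constructor
  have htopmem : ∀ F : Set B, IsPrimePrecFilter sup inf bot prec F → top ∈ F := by
    intro F hF
    obtain ⟨a, ha⟩ := hF.1.1
    rw [hF.1.2.2]
    exact ⟨a, ha, h.prec_top a⟩
  have hmeetmem : ∀ (F : Set B), IsPrimePrecFilter sup inf bot prec F → ∀ x y : B,
      inf x y ∈ F → x ∈ F ∧ y ∈ F := by
    intro F hF x y hxy
    letI := h.distribLattice
    rw [hF.1.2.2] at hxy
    obtain ⟨a, ha, hp⟩ := hxy
    constructor
    · rw [hF.1.2.2]
      exact ⟨a, ha, h.mono_right (h.le_to_infeq inf_le_left) hp⟩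
    · rw [hF.1.2.2]
      exact ⟨a, ha, h.mono_right (h.le_to_infeq inf_le_right) hp⟩
  have hbasis : TopologicalSpace.IsTopologicalBasis
      {S | ∃ x : B, S = {F : {F : Set B // IsPrimePrecFilter sup inf bot prec F} | x ∈ F.1}} := by
    refine ⟨?_, ?_, rfl⟩
    · rintro t₁ ⟨x, rfl⟩ t₂ ⟨y, rfl⟩ G ⟨hx, hy⟩
      refine ⟨{F | inf x y ∈ F.1}, ⟨inf x y, rfl⟩, G.2.1.2.1 x hx y hy, ?_⟩
      intro G' hG'
      exact ⟨(hmeetmem G'.1 G'.2 x y hG').1, (hmeetmem G'.1 G'.2 x y hG').2⟩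
    · apply Set.eq_univ_of_forall
      intro G
      exact ⟨{F | top ∈ F.1}, ⟨top, rfl⟩, htopmem G.1 G.2⟩
  apply isCompact_of_finite_subcover
  intro ι U hUopen hUcover
  have hXcover : ∀ Fs : {F : Set B // IsPrimePrecFilter sup inf bot prec F},
      ∃ x : B, (∃ i, {G : {F : Set B // IsPrimePrecFilter sup inf bot prec F} | x ∈ G.1} ⊆ U i)
        ∧ x ∈ Fs.1 := by
    intro Fs
    have hmem : Fs ∈ ⋃ i, U i := hUcover (Set.mem_univ _)
    obtain ⟨i, hi⟩ := Set.mem_iUnion.1 hmem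
    obtain ⟨s, ⟨x, rfl⟩, hmemx, hsub⟩ := hbasis.exists_subset_of_mem_open hi (hUopen i)
    exact ⟨x, ⟨i, hsub⟩, hmemx⟩
  have hM : ∃ M : List B, (∀ m ∈ M, m ∈ {x : B |
      ∃ i, {G : {F : Set B // IsPrimePrecFilter sup inf bot prec F} | x ∈ G.1} ⊆ U i}) ∧
      prec top (M.foldr sup bot) := by
    by_contra hc
    obtain ⟨F, hFprime, hFavoid⟩ := h.exists_prime_avoiding _ hc
    obtain ⟨x, hx1, hx2⟩ := hXcover ⟨F, hFprime⟩
    exact hFavoid x hx1 hx2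
  obtain ⟨M, hMX, htopM⟩ := hM
  choose φ hφ using hMX
  refine ⟨(M.attach.map fun m => φ m.1 m.2).toFinset, ?_⟩
  intro Fs _
  have htopF : top ∈ Fs.1 := htopmem Fs.1 Fs.2
  have hjoin : M.foldr sup bot ∈ Fs.1 := by
    rw [Fs.2.1.2.2]
    exact ⟨top, htopF, htopM⟩
  obtain ⟨m, hmM, hmF⟩ := Fs.2.2 M hjoin
  refine Set.mem_biUnion ?_ (hφ m hmM hmF)
  exact List.mem_toFinset.mpr (List.mem_map.2 ⟨⟨m, hmM⟩, List.mem_attach _ _, rfl⟩)
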